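/- Let u₀ be non-negative, bounded by K, with m₀ bounded by M, and suppose L := sup_{ρ≥0} |u₀(ρ)^α + m₀(ρ) d(u₀^{α-1})/dρ (ρ)| < ∞. Then for all 0 ≤ t < 1/(αL), the map P_t(ρ₀) = ρ₀ + α m₀(ρ₀) u₀(ρ₀)^{α-1} t satisfies dP_t/dρ₀ ≥ 1 - αtL > 0, and hence P_t is injective on [0,∞). -/

import Mathlib

open Real Set intervalIntegral

theorem characteristics_short_time (α K M L : ℝ) (hα : 1 < α) (hL : 0 < L)
    (u₀ : ℝ → ℝ) (hnn : ∀ ρ, 0 ≤ u₀ ρ) (hK : ∀ ρ, u₀ ρ ≤ K)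
    (m₀ : ℝ → ℝ) (hm₀ : ∀ ρ, m₀ ρ = ∫ σ in (0:ℝ)..ρ, u₀ σ)
    (hMbd : ∀ ρ, 0 ≤ ρ → m₀ ρ ≤ M)
    (hdiff : Differentiable ℝ (fun ρ => u₀ ρ ^ (α - 1)))
    (hLbd : ∀ ρ, 0 ≤ ρ →
      |u₀ ρ ^ α + m₀ ρ * deriv (fun x => u₀ x ^ (α - 1)) ρ| ≤ L)
    (P : ℝ → ℝ → ℝ)
    (hP : ∀ t ρ₀, P t ρ₀ = ρ₀ + α * m₀ ρ₀ * u₀ ρ₀ ^ (α - 1) * t) :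
    ∀ t : ℝ, 0 ≤ t → t < 1 / (α * L) →
      0 < 1 - α * t * L ∧
      (∀ ρ₀ : ℝ, 0 ≤ ρ₀ → ∃ d : ℝ, HasDerivAt (P t) d ρ₀ ∧ 1 - α * t * L ≤ d) ∧
      InjOn (P t) (Ici 0) := by
  have hα1 : (0:ℝ) < α - 1 := by linarith
  have hα0 : (0:ℝ) < α := by linarith
  set g : ℝ → ℝ := fun ρ => u₀ ρ ^ (α - 1) with hg
  have hgc : Continuous g := hdiff.continuous
  -- continuity of u₀
  have hrepr : u₀ = fun ρ => g ρ ^ (1 / (α - 1)) := by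
    funext ρ
    show u₀ ρ = (u₀ ρ ^ (α - 1)) ^ (1 / (α - 1))
    rw [← Real.rpow_mul (hnn ρ), mul_one_div, div_self hα1.ne', Real.rpow_one]
  have hu : Continuous u₀ := by
    rw [hrepr]
    exact hgc.rpow_const (fun x => Or.inr (by positivity))
  -- m₀ has derivative u₀
  have hm : ∀ ρ, HasDerivAt m₀ (u₀ ρ) ρ := by
    intro ρ
    have heq : m₀ = fun r => ∫ σ in (0:ℝ)..r, u₀ σ := funext hm₀
    rw [heq]
    exact intervalIntegral.integral_hasDerivAt_right
      (hu.intervalIntegrable _ _) (hu.stronglyMeasurableAtFilter _ _) hu.continuousAt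
  -- pointwise power identity
  have hpow : ∀ ρ, u₀ ρ * g ρ = u₀ ρ ^ α := by
    intro ρ
    rcases eq_or_lt_of_le (hnn ρ) with h | h
    · simp [hg, ← h, Real.zero_rpow hα1.ne', Real.zero_rpow hα0.ne']
    · show u₀ ρ * u₀ ρ ^ (α - 1) = u₀ ρ ^ α
      have h2 : u₀ ρ ^ α = u₀ ρ ^ (1 + (α - 1)) := by congr 1; ring
      rw [h2, Real.rpow_add h, Real.rpow_one]
  intro t ht htlt
  have hαL : 0 < α * L := by positivity
  have h1 : 0 < 1 - α * t * L := by
    have := (lt_div_iff₀ hαL).mp htlt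
    nlinarith
  -- derivative of P t
  have hD : ∀ ρ₀ : ℝ, HasDerivAt (P t)
      (1 + α * t * (u₀ ρ₀ ^ α + m₀ ρ₀ * deriv g ρ₀)) ρ₀ := by
    intro ρ₀
    have hgd : HasDerivAt g (deriv g ρ₀) ρ₀ := (hdiff ρ₀).hasDerivAt
    have h0 : HasDerivAt (fun ρ => ρ + α * m₀ ρ * g ρ * t)
        (1 + (α * u₀ ρ₀ * g ρ₀ + α * m₀ ρ₀ * deriv g ρ₀) * t) ρ₀ := by
      have := (hasDerivAt_id ρ₀).add ((((hm ρ₀).const_mul α).mul hgd).mul_const t)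
      exact this
    have hPeq : P t = fun ρ => ρ + α * m₀ ρ * g ρ * t := funext (fun ρ => hP t ρ)
    rw [hPeq]
    convert h0 using 1
    have := hpow ρ₀
    nlinarith [hpow ρ₀]
  have hderiv_eq : ∀ ρ₀ : ℝ, deriv (P t) ρ₀
      = 1 + α * t * (u₀ ρ₀ ^ α + m₀ ρ₀ * deriv g ρ₀) := fun ρ₀ => (hD ρ₀).deriv
  have hbd : ∀ ρ₀ : ℝ, 0 ≤ ρ₀ →
      1 - α * t * L ≤ 1 + α * t * (u₀ ρ₀ ^ α + m₀ ρ₀ * deriv g ρ₀) := by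
    intro ρ₀ hρ
    have h2 := hLbd ρ₀ hρ
    have h3 : -(L) ≤ u₀ ρ₀ ^ α + m₀ ρ₀ * deriv g ρ₀ := (abs_le.mp h2).1
    have hαt : 0 ≤ α * t := by positivity
    nlinarith
  refine ⟨h1, fun ρ₀ hρ => ⟨_, hD ρ₀, hbd ρ₀ hρ⟩, ?_⟩
  have hmono : StrictMonoOn (P t) (Ici 0) := by
    apply strictMonoOn_of_deriv_pos (convex_Ici 0)
      (fun x _ => ((hD x).differentiableAt.continuousAt).continuousWithinAt)
    intro x hx
    rw [interior_Ici] at hx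
    rw [hderiv_eq x]
    exact lt_of_lt_of_le h1 (hbd x (le_of_lt hx))
  exact hmono.injOn
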